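/- Let X be a reflexive Banach space and let (Qₙ)_{n ∈ ℕ} be a sequence of idempotents in B(X) with sup_n ‖Qₙ‖ < ∞ and Qₙ ≤ Q_{n+1} for all n (i.e., QₙQ_{n+1} = Qₙ = Q_{n+1}Qₙ). Then there exists an idempotent Q ∈ B(X) such that Qₙ x → Q x in norm for every x ∈ X. -/

import Mathlib

open Filter

set_option maxHeartbeats 1600000 in
/-- In a reflexive Banach space, a uniformly bounded monotone increasing sequence of
idempotent operators converges in the strong operator topology to an idempotent. -/
theorem increasing_idempotents_sot_limit
    {X : Type*} [NormedAddCommGroup X] [NormedSpace ℂ X] [CompleteSpace X]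
    (hrefl : Function.Bijective (NormedSpace.inclusionInDoubleDual ℂ X))
    (Q : ℕ → X →L[ℂ] X)
    (hidem : ∀ n, IsIdempotentElem (Q n))
    (hbdd : ∃ C : ℝ, ∀ n, ‖Q n‖ ≤ C)
    (hmono : ∀ n, Q n * Q (n + 1) = Q n ∧ Q (n + 1) * Q n = Q n) :
    ∃ Qlim : X →L[ℂ] X, IsIdempotentElem Qlim ∧
      ∀ x : X, Tendsto (fun n => Q n x) atTop (nhds (Qlim x)) := by
  obtain ⟨C₀, hC₀⟩ := hbdd
  set C : ℝ := max C₀ 0 with hCdef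
  have hC : ∀ n, ‖Q n‖ ≤ C := fun n => (hC₀ n).trans (le_max_left _ _)
  have hC0 : (0 : ℝ) ≤ C := le_max_right _ _
  have hCx : ∀ n (v : X), ‖Q n v‖ ≤ C * ‖v‖ := fun n v =>
    ((Q n).le_opNorm v).trans (mul_le_mul_of_nonneg_right (hC n) (norm_nonneg v))
  -- the "min" rules for products
  have hle : ∀ m n, m ≤ n → Q m * Q n = Q m ∧ Q n * Q m = Q m := by
    intro m n hmn
    induction n, hmn using Nat.le_induction with
    | base => exact ⟨hidem m, hidem m⟩
    | succ n hmn ih =>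
      constructor
      · calc Q m * Q (n + 1) = (Q m * Q n) * Q (n + 1) := by rw [ih.1]
          _ = Q m * (Q n * Q (n + 1)) := by rw [mul_assoc]
          _ = Q m * Q n := by rw [(hmono n).1]
          _ = Q m := ih.1
      · calc Q (n + 1) * Q m = Q (n + 1) * (Q n * Q m) := by rw [ih.2]
          _ = (Q (n + 1) * Q n) * Q m := by rw [mul_assoc]
          _ = Q n * Q m := by rw [(hmono n).2]
          _ = Q m := ih.2
  -- the subspace generated by all the ranges
  set M : Submodule ℂ X := ⨆ n, LinearMap.range (Q n : X →ₗ[ℂ] X) with hMdef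
  have hQmemM : ∀ n (v : X), Q n v ∈ M := fun n v =>
    Submodule.mem_iSup_of_mem n ⟨v, rfl⟩
  have hMdir : ∀ z ∈ M, ∃ m, z ∈ LinearMap.range ((Q m : X →ₗ[ℂ] X)) := by
    have hmonoR : Monotone (fun n => LinearMap.range (Q n : X →ₗ[ℂ] X)) := by
      apply monotone_nat_of_le_succ
      rintro n z ⟨w, rfl⟩
      refine ⟨Q n w, ?_⟩
      have h := congrArg (fun T : X →L[ℂ] X => T w) (hle n (n + 1) (Nat.le_succ n)).2
      simpa [ContinuousLinearMap.mul_apply] using h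
    intro z hz
    exact (Submodule.mem_iSup_of_directed _ hmonoR.directed_le).1 hz
  -- main step: pointwise convergence, together with compatibility
  have key : ∀ x : X, ∃ y : X, (∀ m, Q m y = Q m x) ∧
      Tendsto (fun n => Q n x) atTop (nhds y) := by
    intro x
    set U : Ultrafilter ℕ := Ultrafilter.of atTop with hUdef
    have hU : (U : Filter ℕ) ≤ atTop := Ultrafilter.of_le _
    -- ultrafilter limits of `φ (Q n x)`
    have hex : ∀ φ : StrongDual ℂ X, ∃ a : ℂ,
        Tendsto (fun n => φ (Q n x)) (U : Filter ℕ) (nhds a) := by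
      intro φ
      have hmem : ∀ n, φ (Q n x) ∈ Metric.closedBall (0 : ℂ) (‖φ‖ * (C * ‖x‖)) := by
        intro n
        rw [Metric.mem_closedBall, dist_zero_right]
        exact (φ.le_opNorm _).trans
          (mul_le_mul_of_nonneg_left (hCx n x) (norm_nonneg φ))
      obtain ⟨a, -, ha⟩ := (isCompact_closedBall (0 : ℂ) (‖φ‖ * (C * ‖x‖))).ultrafilter_le_nhds
        (U.map fun n => φ (Q n x))
        (by
          rw [Ultrafilter.coe_map, Filter.le_principal_iff, Filter.mem_map]
          exact Filter.univ_mem' hmem)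
      exact ⟨a, by rwa [Ultrafilter.coe_map] at ha⟩
    choose Fa hFa using hex
    have hadd : ∀ φ ψ, Fa (φ + ψ) = Fa φ + Fa ψ := fun φ ψ =>
      tendsto_nhds_unique (hFa (φ + ψ)) (by simpa using (hFa φ).add (hFa ψ))
    have hsmul : ∀ (c : ℂ) φ, Fa (c • φ) = c • Fa φ := fun c φ =>
      tendsto_nhds_unique (hFa (c • φ)) (by simpa using (hFa φ).const_smul c)
    have hbound : ∀ φ, ‖Fa φ‖ ≤ C * ‖x‖ * ‖φ‖ := by
      intro φ
      refine le_of_tendsto' ((continuous_norm.tendsto _).comp (hFa φ)) fun n => ?_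
      calc ‖φ (Q n x)‖ ≤ ‖φ‖ * ‖Q n x‖ := φ.le_opNorm _
        _ ≤ ‖φ‖ * (C * ‖x‖) := mul_le_mul_of_nonneg_left (hCx n x) (norm_nonneg φ)
        _ = C * ‖x‖ * ‖φ‖ := by ring
    let Flin : StrongDual ℂ X →ₗ[ℂ] ℂ :=
      { toFun := Fa, map_add' := hadd, map_smul' := hsmul }
    let F : StrongDual ℂ (StrongDual ℂ X) :=
      Flin.mkContinuous (C * ‖x‖) hbound
    obtain ⟨y, hy⟩ := hrefl.2 F
    have hyφ : ∀ φ : StrongDual ℂ X,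
        Tendsto (fun n => φ (Q n x)) (U : Filter ℕ) (nhds (φ y)) := by
      intro φ
      have h1 : φ y = Fa φ := by
        have h := congrArg (fun T : StrongDual ℂ (StrongDual ℂ X) => T φ) hy
        simpa [NormedSpace.dual_def, F, Flin] using h
      rw [h1]; exact hFa φ
    -- compatibility : `Q m y = Q m x`
    have hQy : ∀ m, Q m y = Q m x := by
      intro m
      rw [NormedSpace.eq_iff_forall_dual_eq ℂ]
      intro g
      have h1 : Tendsto (fun n => (g.comp (Q m)) (Q n x)) (U : Filter ℕ)
          (nhds ((g.comp (Q m)) y)) := hyφ _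
      have h2 : ∀ᶠ n in (U : Filter ℕ), (g.comp (Q m)) (Q n x) = g (Q m x) := by
        refine Filter.Eventually.filter_mono hU ?_
        filter_upwards [eventually_ge_atTop m] with n hn
        have h := congrArg (fun T : X →L[ℂ] X => g (T x)) (hle m n hn).1
        simpa [ContinuousLinearMap.mul_apply] using h
      have h3 : Tendsto (fun n => (g.comp (Q m)) (Q n x)) (U : Filter ℕ)
          (nhds (g (Q m x))) := Tendsto.congr' (EventuallyEq.symm h2) tendsto_const_nhds
      have := tendsto_nhds_unique h1 h3
      simpa using this
    -- `y` lies in the closure of `M`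
    have hym : y ∈ closure (M : Set X) := by
      by_contra hyM
      have hconv : Convex ℝ (M : Set X) := by
        have h := (M.restrictScalars ℝ).convex
        rwa [Submodule.coe_restrictScalars] at h
      obtain ⟨f, u, hfu, huy⟩ :=
        geometric_hahn_banach_closed_point hconv.closure isClosed_closure hyM
      set φ : X →L[ℂ] ℂ := f.extendTo𝕜'
      have hre : ∀ z : X, RCLike.re (φ z) = f z := by
        intro z
        exact StrongDual.re_extendRCLike_apply f z
      have h1 : Tendsto (fun n => RCLike.re (φ (Q n x))) (U : Filter ℕ)
          (nhds (RCLike.re (φ y))) := (RCLike.continuous_re.tendsto _).comp (hyφ φ)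
      have h2 : RCLike.re (φ y) ≤ u := by
        refine le_of_tendsto h1 (Filter.Eventually.of_forall fun n => ?_)
        rw [hre]
        exact le_of_lt (hfu _ (subset_closure (hQmemM n x)))
      rw [hre] at h2
      exact absurd (lt_of_lt_of_le huy h2) (lt_irrefl u)
    -- norm convergence
    refine ⟨y, hQy, ?_⟩
    rw [Metric.tendsto_atTop]
    intro ε hε
    have hδ : (0 : ℝ) < ε / (C + 2) := by positivity
    obtain ⟨z, hzM, hz⟩ := Metric.mem_closure_iff.1 hym (ε / (C + 2)) hδ
    obtain ⟨m, hm⟩ := hMdir z hzM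
    obtain ⟨w, hw⟩ := hm
    refine ⟨m, fun n hn => ?_⟩
    have hzn : Q n z = z := by
      have h := congrArg (fun T : X →L[ℂ] X => T w) (hle m n hn).2
      simp only [ContinuousLinearMap.mul_apply] at h
      rw [← hw]
      exact h
    have hyz : ‖y - z‖ < ε / (C + 2) := by
      rw [← dist_eq_norm]; exact hz
    have hcalc : ‖Q n x - y‖ ≤ (C + 1) * ‖y - z‖ := by
      have heq : Q n x - y = Q n (y - z) + (z - y) := by
        rw [map_sub, hzn, hQy n]; abel
      calc ‖Q n x - y‖ = ‖Q n (y - z) + (z - y)‖ := by rw [heq]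
        _ ≤ ‖Q n (y - z)‖ + ‖z - y‖ := norm_add_le _ _
        _ ≤ C * ‖y - z‖ + ‖z - y‖ := by gcongr; exact hCx n _
        _ = (C + 1) * ‖y - z‖ := by rw [norm_sub_rev z y]; ring
    rw [dist_eq_norm]
    refine lt_of_le_of_lt hcalc ?_
    have hC2 : (0 : ℝ) < C + 2 := by linarith
    rw [lt_div_iff₀ hC2] at hyz
    nlinarith [norm_nonneg (y - z)]
  -- assemble the limit operator
  choose g hg1 hg2 using key
  have hptw : Tendsto (fun n => fun v => Q n v) atTop (nhds g) := tendsto_pi_nhds.2 hg2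
  let Qlim : X →L[ℂ] X := continuousLinearMapOfTendsto Q hptw
  have hQlimeq : ∀ v, Qlim v = g v := fun v => rfl
  have htend : ∀ v, Tendsto (fun n => Q n v) atTop (nhds (Qlim v)) := by
    intro v; rw [hQlimeq]; exact hg2 v
  refine ⟨Qlim, ?_, htend⟩
  have hfix : ∀ v, Qlim (Qlim v) = Qlim v := by
    intro v
    have h1 : Tendsto (fun n => Q n (Qlim v)) atTop (nhds (Qlim (Qlim v))) := htend _
    have h2 : Tendsto (fun n => Q n (Qlim v)) atTop (nhds (Qlim v)) := by
      have heq : (fun n => Q n (Qlim v)) = fun n => Q n v := by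
        funext n; rw [hQlimeq]; exact hg1 v n
      rw [heq]; exact htend v
    exact tendsto_nhds_unique h1 h2
  exact ContinuousLinearMap.ext fun v => by
    simpa [ContinuousLinearMap.mul_apply] using hfix v
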